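/- For every V-module W and every V-bilinear map μ : W × W → W, the map ι : Ω^ev(W) → T W is a bijective V-linear map; that is, ι is an isomorphism of V-modules from the even-degree noncommutative differential forms onto the non-unital tensor algebra of W. -/

import Mathlib

/-!
Statement 0. `V` is a discrete valuation ring with uniformiser `π`.  For a `V`-module `W`,
`T W := ⊕_{n≥1} W^{⊗n}` is the non-unital tensor algebra; we realise it as the kernel of the
augmentation `TensorAlgebra V W → V`.  `W⁺ := V ⊕ W`, `Ω⁰(W) := W`,
`Ω^{2l}(W) := W⁺ ⊗ W^{⊗2l}` (the even tensor power `W^{⊗2l}` being encoded as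
`(W ⊗ W)^{⊗ l}`), and `Ω^{ev}(W) := ⊕_{l≥0} Ω^{2l}(W)`.  Given a `V`-bilinear
`μ : W × W → W`, the map `ι : Ω^{ev}(W) → T W` sends
`x₀ dx₁ ⋯ dx_{2l}` to `x₀ ⊗ (μ(x₁,x₂) − x₁⊗x₂) ⊗ ⋯ ⊗ (μ(x_{2l−1},x_{2l}) − x_{2l−1}⊗x_{2l})`.
The claim: `ι` is an isomorphism of `V`-modules from `Ω^{ev}(W)` onto `T W`, i.e. it is
injective with range the augmentation ideal.
-/

open scoped TensorProduct DirectSum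

noncomputable section

variable (V : Type) [CommRing V] [IsDomain V] [IsDiscreteValuationRing V]
variable (W : Type) [AddCommGroup W] [Module V W]
variable (μ : W →ₗ[V] W →ₗ[V] W)

/-- The map `W ⊗ W → TensorAlgebra V W`, `x ⊗ y ↦ μ(x,y) − x ⊗ y`. -/
def fedosovD : W ⊗[V] W →ₗ[V] TensorAlgebra V W :=
  TensorProduct.lift
    (μ.compr₂ (TensorAlgebra.ι V) -
      (LinearMap.mul V (TensorAlgebra V W)).compl₁₂ (TensorAlgebra.ι V) (TensorAlgebra.ι V))

/-- The product of `l` factors `μ(x_{2i−1},x_{2i}) − x_{2i−1} ⊗ x_{2i}` in the tensor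
algebra, as a linear map on `W^{⊗2l} = (W ⊗ W)^{⊗l}`. -/
def fedosovProd (l : ℕ) : (⨂[V]^l (W ⊗[V] W)) →ₗ[V] TensorAlgebra V W :=
  PiTensorProduct.lift
    ((MultilinearMap.mkPiAlgebraFin V l (TensorAlgebra V W)).compLinearMap
      fun _ => fedosovD V W μ)

/-- `W⁺ = V ⊕ W` mapped into the unital tensor algebra, `(a, w) ↦ a·1 + w`. -/
def wplusToTA : (V × W) →ₗ[V] TensorAlgebra V W :=
  (Algebra.linearMap V (TensorAlgebra V W)).comp (LinearMap.fst V V W) +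
    (TensorAlgebra.ι V).comp (LinearMap.snd V V W)

/-- `Ω^{2(l+1)}(W) = W⁺ ⊗ W^{⊗2(l+1)}`, with `W^{⊗2(l+1)}` encoded as `(W⊗W)^{⊗(l+1)}`. -/
abbrev OmegaTwo (l : ℕ) := (V × W) ⊗[V] (⨂[V]^(l + 1) (W ⊗[V] W))

/-- `Ω^{ev}(W) = Ω⁰(W) × ⨁_{l≥1} Ω^{2l}(W)`, where `Ω⁰(W) = W`. -/
abbrev OmegaEv := W × (⨁ l : ℕ, OmegaTwo V W l)

/-- The component `ι : Ω^{2(l+1)}(W) → TensorAlgebra V W`,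
`x₀ dx₁ ⋯ dx_{2l+2} ↦ x₀ ⊗ ∏ (μ(x,x') − x⊗x')`. -/
def iotaTwo (l : ℕ) : OmegaTwo V W l →ₗ[V] TensorAlgebra V W :=
  TensorProduct.lift
    ((LinearMap.mul V (TensorAlgebra V W)).compl₁₂ (wplusToTA V W) (fedosovProd V W μ (l + 1)))

/-- The map `ι : Ω^{ev}(W) → TensorAlgebra V W`, with image inside the non-unital tensor
algebra `T W` (the augmentation ideal). -/
def iotaEv : OmegaEv V W →ₗ[V] TensorAlgebra V W :=
  (TensorAlgebra.ι V).comp (LinearMap.fst V _ _) +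
    (DirectSum.toModule V ℕ (TensorAlgebra V W) fun l => iotaTwo V W μ l).comp
      (LinearMap.snd V _ _)

/-- The augmentation `TensorAlgebra V W → V`; its kernel is `T W = ⊕_{n≥1} W^{⊗n}`. -/
def augmentation : TensorAlgebra V W →ₐ[V] V := TensorAlgebra.lift V (0 : W →ₗ[V] V)
set_option linter.unusedSectionVars false
set_option maxHeartbeats 1000000

/-! ### Auxiliary machinery -/

instance omegaTwoAddCommGroup : ∀ l : ℕ, AddCommGroup (OmegaTwo V W l) := fun _ => inferInstance

instance omegaEvAddCommGroup : AddCommGroup (OmegaEv V W) := inferInstance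

/-- `M ≅ ⨂¹ M`. -/
def tp1E (M : Type) [AddCommGroup M] [Module V M] : M ≃ₗ[V] ⨂[V]^1 M :=
  (PiTensorProduct.subsingletonEquiv (s := fun _ => M) (0 : Fin 1)).symm

lemma tp1E_apply (M : Type) [AddCommGroup M] [Module V M] (x : M) :
    tp1E V M x = PiTensorProduct.tprod V (fun _ : Fin 1 => x) := by
  rw [tp1E, LinearEquiv.symm_apply_eq, PiTensorProduct.subsingletonEquiv_apply_tprod]

lemma tp1E_tprod (M : Type) [AddCommGroup M] [Module V M] (q : Fin 1 → M) :
    PiTensorProduct.tprod V q = tp1E V M (q 0) := by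
  rw [tp1E_apply]
  exact congrArg _ (funext fun i => by rw [Subsingleton.elim i 0])

lemma mulE_tprod {M : Type} [AddCommGroup M] [Module V M] {n m : ℕ}
    (p : Fin n → M) (q : Fin m → M) :
    TensorPower.mulEquiv (R := V) (PiTensorProduct.tprod V p ⊗ₜ[V] PiTensorProduct.tprod V q)
      = PiTensorProduct.tprod V (Fin.append p q) :=
  (TensorPower.gMul_def _ _).symm.trans (TensorPower.tprod_mul_tprod V p q)

/-- Appending a single factor on the right of a tensor power, as a bilinear map. -/
def appPow (M : Type) [AddCommGroup M] [Module V M] (n : ℕ) :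
    (⨂[V]^n M) →ₗ[V] M →ₗ[V] ⨂[V]^(n+1) M :=
  LinearMap.mk₂ V (fun τ x => TensorPower.mulEquiv (τ ⊗ₜ[V] tp1E V M x))
    (fun τ₁ τ₂ x => by rw [TensorProduct.add_tmul, map_add])
    (fun c τ x => by rw [← TensorProduct.smul_tmul', map_smul])
    (fun τ x₁ x₂ => by rw [map_add, TensorProduct.tmul_add, map_add])
    (fun c τ x => by rw [map_smul, TensorProduct.tmul_smul, map_smul])

lemma appPow_apply (M : Type) [AddCommGroup M] [Module V M] (n : ℕ)
    (τ : ⨂[V]^n M) (x : M) :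
    appPow V M n τ x = TensorPower.mulEquiv (τ ⊗ₜ[V] tp1E V M x) := rfl

lemma appPow_tprod (M : Type) [AddCommGroup M] [Module V M] (n : ℕ)
    (p : Fin n → M) (x : M) :
    appPow V M n (PiTensorProduct.tprod V p) x = PiTensorProduct.tprod V (Fin.snoc p x) := by
  rw [appPow_apply, tp1E_apply, mulE_tprod, Fin.append_right_eq_snoc]

/-- Ordered product of the images of the factors of a tensor power in an algebra. -/
def prodPow {A : Type} [Ring A] [Algebra V A] {M : Type} [AddCommGroup M] [Module V M]
    (g : M →ₗ[V] A) (n : ℕ) : (⨂[V]^n M) →ₗ[V] A :=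
  PiTensorProduct.lift ((MultilinearMap.mkPiAlgebraFin V n A).compLinearMap fun _ => g)

lemma prodPow_tprod {A : Type} [Ring A] [Algebra V A] {M : Type} [AddCommGroup M] [Module V M]
    (g : M →ₗ[V] A) (n : ℕ) (p : Fin n → M) :
    prodPow V g n (PiTensorProduct.tprod V p) = (List.ofFn fun i => g (p i)).prod := by
  simp [prodPow, PiTensorProduct.lift.tprod, MultilinearMap.mkPiAlgebraFin_apply]

lemma prodPow_tp1E {A : Type} [Ring A] [Algebra V A] {M : Type} [AddCommGroup M] [Module V M]
    (g : M →ₗ[V] A) (x : M) :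
    prodPow V g 1 (tp1E V M x) = g x := by
  rw [tp1E_apply, prodPow_tprod]
  simp

lemma prodPow_mulE {A : Type} [Ring A] [Algebra V A] {M : Type} [AddCommGroup M] [Module V M]
    (g : M →ₗ[V] A) (n m : ℕ) (τ : ⨂[V]^n M) (σ : ⨂[V]^m M) :
    prodPow V g (n + m) (TensorPower.mulEquiv (τ ⊗ₜ[V] σ))
      = prodPow V g n τ * prodPow V g m σ := by
  induction τ using PiTensorProduct.induction_on with
  | smul_tprod r p =>
    induction σ using PiTensorProduct.induction_on with
    | smul_tprod s q =>
      rw [← TensorProduct.smul_tmul', TensorProduct.tmul_smul, map_smul, map_smul, map_smul,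
        map_smul, map_smul, map_smul, mulE_tprod, prodPow_tprod, prodPow_tprod, prodPow_tprod]
      have hfun : (fun i => g (Fin.append p q i))
          = Fin.append (fun i => g (p i)) (fun i => g (q i)) := by
        funext i
        refine Fin.addCases (fun j => ?_) (fun j => ?_) i
        · rw [Fin.append_left, Fin.append_left]
        · rw [Fin.append_right, Fin.append_right]
      rw [hfun, List.ofFn_fin_append, List.prod_append, smul_mul_assoc, mul_smul_comm]
    | add x y hx hy =>
      rw [TensorProduct.tmul_add, map_add, map_add, map_add, hx, hy, mul_add]
  | add x y hx hy =>
    rw [TensorProduct.add_tmul, map_add, map_add, map_add, hx, hy, add_mul]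

lemma prodPow_appPow {A : Type} [Ring A] [Algebra V A] {M : Type} [AddCommGroup M] [Module V M]
    (g : M →ₗ[V] A) (n : ℕ) (τ : ⨂[V]^n M) (x : M) :
    prodPow V g (n + 1) (appPow V M n τ x) = prodPow V g n τ * g x := by
  rw [appPow_apply, prodPow_mulE, prodPow_tp1E]

/-- `W ⊗ W ≅ ⨂² W`. -/
def e2 : W ⊗[V] W ≃ₗ[V] ⨂[V]^2 W :=
  (TensorProduct.congr (tp1E V W) (tp1E V W)).trans
    (TensorPower.mulEquiv (R := V) (M := W) (n := 1) (m := 1))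

lemma e2_tmul (x y : W) :
    e2 V W (x ⊗ₜ[V] y)
      = PiTensorProduct.tprod V (Fin.append (fun _ : Fin 1 => x) (fun _ : Fin 1 => y)) := by
  rw [e2, LinearEquiv.trans_apply, TensorProduct.congr_tmul, tp1E_apply, tp1E_apply, mulE_tprod]

lemma fin_two_append {α : Type*} (p : Fin 2 → α) :
    Fin.append (fun _ : Fin 1 => p 0) (fun _ : Fin 1 => p 1) = p := by
  rw [Fin.append_right_eq_snoc]
  funext i
  refine Fin.lastCases ?_ ?_ i
  · rw [Fin.snoc_last]
    exact congrArg p (Fin.ext rfl)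
  · intro j
    rw [Fin.snoc_castSucc]
    rw [Subsingleton.elim j 0]
    rfl

lemma tprod_eq_e2 (p : Fin 2 → W) :
    PiTensorProduct.tprod V p = e2 V W (p 0 ⊗ₜ[V] p 1) := by
  rw [e2_tmul, fin_two_append]

lemma mulE_e2 (n : ℕ) (τ : ⨂[V]^(n+1) W) (x y : W) :
    TensorPower.mulEquiv (R := V) (τ ⊗ₜ[V] e2 V W (x ⊗ₜ[V] y))
      = appPow V W (n+2) (appPow V W (n+1) τ x) y := by
  induction τ using PiTensorProduct.induction_on with
  | smul_tprod r p =>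
    rw [← TensorProduct.smul_tmul']
    simp only [map_smul, LinearMap.smul_apply]
    congr 1
    rw [e2_tmul, mulE_tprod, appPow_tprod, appPow_tprod]
    congr 1
    have h1 : Fin.append p (Fin.append (fun _ : Fin 1 => x) (fun _ : Fin 1 => y))
        = Fin.append (Fin.append p (fun _ : Fin 1 => x)) (fun _ : Fin 1 => y) := by
      rw [Fin.append_assoc]
      exact funext fun i => rfl
    rw [h1, Fin.append_right_eq_snoc, Fin.append_right_eq_snoc]
  | add u v hu hv =>
    simp only [TensorProduct.add_tmul, map_add, LinearMap.add_apply]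
    rw [hu, hv]

/-- Inclusion of `Ω⁰ = W` into `Ω^{ev}`. -/
def om0 : W →ₗ[V] OmegaEv V W := LinearMap.inl V W _

/-- Inclusion of `Ω^{2(l+1)}` into `Ω^{ev}`. -/
def omInj (l : ℕ) : OmegaTwo V W l →ₗ[V] OmegaEv V W :=
  (LinearMap.inr V W _).comp (DirectSum.lof V ℕ (OmegaTwo V W) l)

lemma iotaEv_apply (w : W) (d : ⨁ l : ℕ, OmegaTwo V W l) :
    iotaEv V W μ (w, d) = TensorAlgebra.ι V w
      + DirectSum.toModule V ℕ (TensorAlgebra V W) (fun l => iotaTwo V W μ l) d := rfl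

lemma iotaEv_om0 (w : W) : iotaEv V W μ (om0 V W w) = TensorAlgebra.ι V w := by
  rw [om0, LinearMap.inl_apply, iotaEv_apply, map_zero, add_zero]

lemma iotaEv_omInj (l : ℕ) (z : OmegaTwo V W l) :
    iotaEv V W μ (omInj V W l z) = iotaTwo V W μ l z := by
  rw [omInj, LinearMap.comp_apply, LinearMap.inr_apply, iotaEv_apply, map_zero, zero_add,
    DirectSum.toModule_lof]

lemma iotaTwo_tmul (l : ℕ) (x : V × W) (τ : ⨂[V]^(l+1) (W ⊗[V] W)) :
    iotaTwo V W μ l (x ⊗ₜ[V] τ) = wplusToTA V W x * fedosovProd V W μ (l+1) τ := by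
  rw [iotaTwo, TensorProduct.lift.tmul, LinearMap.compl₁₂_apply, LinearMap.mul_apply']

lemma fedosovProd_eq (n : ℕ) :
    fedosovProd V W μ n = prodPow V (fedosovD V W μ) n := rfl

lemma fedosovD_tmul (x y : W) :
    fedosovD V W μ (x ⊗ₜ[V] y)
      = TensorAlgebra.ι V (μ x y) - TensorAlgebra.ι V x * TensorAlgebra.ι V y := by
  rw [fedosovD, TensorProduct.lift.tmul, LinearMap.sub_apply, LinearMap.sub_apply,
    LinearMap.compr₂_apply, LinearMap.compl₁₂_apply, LinearMap.mul_apply']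

lemma wplus_apply (a : V) (w : W) :
    wplusToTA V W (a, w) = algebraMap V (TensorAlgebra V W) a + TensorAlgebra.ι V w := rfl


/-- The `Ω⁰` component of the append map. -/
def appOmW : W →ₗ[V] (W ⊗[V] W) →ₗ[V] OmegaEv V W :=
  LinearMap.mk₂ V (fun w ξ => omInj V W 0 (((0:V), w) ⊗ₜ[V] tp1E V (W ⊗[V] W) ξ))
    (fun w₁ w₂ ξ => by
      rw [show ((0:V), w₁ + w₂) = ((0:V), w₁) + ((0:V), w₂) by simp,
        TensorProduct.add_tmul, map_add])
    (fun c w ξ => by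
      rw [show ((0:V), c • w) = c • ((0:V), w) by simp, ← TensorProduct.smul_tmul', map_smul])
    (fun w ξ₁ ξ₂ => by rw [map_add, TensorProduct.tmul_add, map_add])
    (fun c w ξ => by rw [map_smul, TensorProduct.tmul_smul, map_smul])

/-- The `Ω^{2(l+1)}` component of the append map. -/
def appOmD (l : ℕ) : OmegaTwo V W l →ₗ[V] (W ⊗[V] W) →ₗ[V] OmegaEv V W :=
  TensorProduct.lift <| LinearMap.mk₂ V
    (fun x τ => (omInj V W (l+1)) ∘ₗ (TensorProduct.mk V _ _ x) ∘ₗ (appPow V (W ⊗[V] W) (l+1) τ))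
    (fun x₁ x₂ τ => by
      refine LinearMap.ext fun ξ => ?_
      simp only [LinearMap.comp_apply, LinearMap.add_apply, TensorProduct.mk_apply]
      rw [TensorProduct.add_tmul, map_add])
    (fun c x τ => by
      refine LinearMap.ext fun ξ => ?_
      simp only [LinearMap.comp_apply, LinearMap.smul_apply, TensorProduct.mk_apply]
      rw [← TensorProduct.smul_tmul', map_smul])
    (fun x τ₁ τ₂ => by
      refine LinearMap.ext fun ξ => ?_
      simp only [LinearMap.comp_apply, LinearMap.add_apply, TensorProduct.mk_apply, map_add,
        TensorProduct.tmul_add])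
    (fun c x τ => by
      refine LinearMap.ext fun ξ => ?_
      simp only [LinearMap.comp_apply, LinearMap.smul_apply, TensorProduct.mk_apply, map_smul,
        TensorProduct.tmul_smul])

/-- The append map `Ω^{ev} × (W ⊗ W) → Ω^{ev}`, `ω ↦ ω·dξ`. -/
def appOm : OmegaEv V W →ₗ[V] (W ⊗[V] W) →ₗ[V] OmegaEv V W :=
  LinearMap.coprod (appOmW V W)
    (DirectSum.toModule V ℕ ((W ⊗[V] W) →ₗ[V] OmegaEv V W) (appOmD V W))

lemma appOm_om0 (w : W) (ξ : W ⊗[V] W) :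
    appOm V W (om0 V W w) ξ = omInj V W 0 (((0:V), w) ⊗ₜ[V] tp1E V (W ⊗[V] W) ξ) := by
  simp only [appOm, om0, LinearMap.inl_apply, LinearMap.coprod_apply, map_zero, add_zero]
  rfl

lemma appOm_omInj (l : ℕ) (x : V × W) (τ : ⨂[V]^(l+1) (W ⊗[V] W)) (ξ : W ⊗[V] W) :
    appOm V W (omInj V W l (x ⊗ₜ[V] τ)) ξ
      = omInj V W (l+1) (x ⊗ₜ[V] appPow V (W ⊗[V] W) (l+1) τ ξ) := by
  simp only [appOm, omInj, LinearMap.comp_apply, LinearMap.inr_apply, LinearMap.coprod_apply,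
    map_zero, LinearMap.zero_apply, zero_add]
  rw [DirectSum.toModule_lof]
  rfl

lemma iotaEv_appOm_om0 (w : W) (ξ : W ⊗[V] W) :
    iotaEv V W μ (appOm V W (om0 V W w) ξ)
      = iotaEv V W μ (om0 V W w) * fedosovD V W μ ξ := by
  rw [appOm_om0, iotaEv_om0, iotaEv_omInj, iotaTwo_tmul, wplus_apply, map_zero, zero_add,
    fedosovProd_eq, prodPow_tp1E]

lemma iotaEv_appOm_omInj (l : ℕ) (z : OmegaTwo V W l) (ξ : W ⊗[V] W) :
    iotaEv V W μ (appOm V W (omInj V W l z) ξ)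
      = iotaEv V W μ (omInj V W l z) * fedosovD V W μ ξ := by
  induction z using TensorProduct.induction_on with
  | zero => simp
  | tmul x τ =>
    rw [appOm_omInj, iotaEv_omInj, iotaEv_omInj, iotaTwo_tmul, iotaTwo_tmul, fedosovProd_eq,
      fedosovProd_eq, prodPow_appPow, mul_assoc]
  | add z₁ z₂ h₁ h₂ =>
    simp only [map_add, LinearMap.add_apply]
    rw [h₁, h₂, add_mul]

lemma iotaEv_appOm_inr (d : ⨁ l : ℕ, OmegaTwo V W l) (ξ : W ⊗[V] W) :
    iotaEv V W μ (appOm V W ((0 : W), d) ξ)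
      = iotaEv V W μ ((0 : W), d) * fedosovD V W μ ξ := by
  induction d using DirectSum.induction_on with
  | zero =>
    rw [show (((0:W), (0 : ⨁ l : ℕ, OmegaTwo V W l)) : OmegaEv V W) = 0 from rfl]
    simp
  | of l z =>
    rw [show (((0:W), DirectSum.of (OmegaTwo V W) l z) : OmegaEv V W) = omInj V W l z from rfl]
    exact iotaEv_appOm_omInj V W μ l z ξ
  | add d₁ d₂ h₁ h₂ =>
    rw [show (((0:W), d₁ + d₂) : OmegaEv V W) = ((0:W), d₁) + (((0:W), d₂) : OmegaEv V W) from
      by rw [Prod.mk_add_mk, add_zero]]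
    simp only [map_add, LinearMap.add_apply]
    rw [h₁, h₂, add_mul]

lemma iotaEv_appOm (ω : OmegaEv V W) (ξ : W ⊗[V] W) :
    iotaEv V W μ (appOm V W ω ξ) = iotaEv V W μ ω * fedosovD V W μ ξ := by
  obtain ⟨w, d⟩ := ω
  rw [show ((w, d) : OmegaEv V W) = om0 V W w + ((0:W), d) from
    by rw [om0, LinearMap.inl_apply, Prod.mk_add_mk, add_zero, zero_add]]
  simp only [map_add, LinearMap.add_apply]
  rw [iotaEv_appOm_om0, iotaEv_appOm_inr, add_mul]


/-- `dξ` as an element of `Ω²`. -/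
def unitOm : (W ⊗[V] W) →ₗ[V] OmegaEv V W :=
  (omInj V W 0) ∘ₗ (TensorProduct.mk V (V × W) (⨂[V]^1 (W ⊗[V] W)) ((1:V), 0))
    ∘ₗ (tp1E V (W ⊗[V] W)).toLinearMap

lemma unitOm_apply (ξ : W ⊗[V] W) :
    unitOm V W ξ = omInj V W 0 (((1:V), (0:W)) ⊗ₜ[V] tp1E V (W ⊗[V] W) ξ) := rfl

/-- `ψ₁ : W^{⊗1} → Ω^{ev}`. -/
def psi0 : (⨂[V]^1 W) →ₗ[V] OmegaEv V W :=
  (om0 V W) ∘ₗ (PiTensorProduct.subsingletonEquiv (0 : Fin 1) :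
    (⨂[V]^1 W) ≃ₗ[V] W).toLinearMap

lemma psi0_tp1E (w : W) : psi0 V W (tp1E V W w) = om0 V W w := by
  rw [psi0, LinearMap.comp_apply, LinearEquiv.coe_coe, tp1E, LinearEquiv.apply_symm_apply]

/-- `ψ₂ : W^{⊗2} → Ω^{ev}`. -/
def psi1 : (⨂[V]^2 W) →ₗ[V] OmegaEv V W :=
  ((om0 V W) ∘ₗ (TensorProduct.lift μ) - unitOm V W) ∘ₗ (e2 V W).symm.toLinearMap

lemma psi1_e2 (ξ : W ⊗[V] W) :
    psi1 V W μ (e2 V W ξ) = om0 V W (TensorProduct.lift μ ξ) - unitOm V W ξ := by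
  rw [psi1, LinearMap.comp_apply, LinearEquiv.coe_coe, LinearEquiv.symm_apply_apply,
    LinearMap.sub_apply, LinearMap.comp_apply]

/-- The recursion step defining `ψ_{n+3}` from `ψ_{n+1}` and `ψ_{n+2}`. -/
def psiStep (n : ℕ) (f : (⨂[V]^(n+1) W) →ₗ[V] OmegaEv V W)
    (g : (⨂[V]^(n+2) W) →ₗ[V] OmegaEv V W) : (⨂[V]^(n+3) W) →ₗ[V] OmegaEv V W :=
  (TensorProduct.lift ((((appPow V W (n+1)).compl₂ (TensorProduct.lift μ)).compr₂ g)
      - ((appOm V W).comp f)))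
    ∘ₗ (TensorProduct.congr (LinearEquiv.refl V (⨂[V]^(n+1) W)) (e2 V W)).symm.toLinearMap
    ∘ₗ (TensorPower.mulEquiv (R := V) (M := W) (n := n+1) (m := 2)).symm.toLinearMap

lemma psiStep_apply (n : ℕ) (f : (⨂[V]^(n+1) W) →ₗ[V] OmegaEv V W)
    (g : (⨂[V]^(n+2) W) →ₗ[V] OmegaEv V W) (t : ⨂[V]^(n+1) W) (ξ : W ⊗[V] W) :
    psiStep V W μ n f g (TensorPower.mulEquiv (R := V) (M := W) (n := n+1) (m := 2)
        (t ⊗ₜ[V] e2 V W ξ))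
      = g (appPow V W (n+1) t (TensorProduct.lift μ ξ)) - appOm V W (f t) ξ := by
  simp only [psiStep, LinearMap.comp_apply, LinearEquiv.coe_coe, LinearEquiv.symm_apply_apply,
    TensorProduct.congr_symm_tmul, LinearEquiv.refl_symm, LinearEquiv.refl_apply,
    TensorProduct.lift.tmul, LinearMap.sub_apply, LinearMap.compr₂_apply,
    LinearMap.compl₂_apply]

/-- The family `ψ` defined by two-step recursion. -/
def psiPair : ∀ n : ℕ,
    ((⨂[V]^(n+1) W) →ₗ[V] OmegaEv V W) × ((⨂[V]^(n+2) W) →ₗ[V] OmegaEv V W)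
  | 0 => (psi0 V W, psi1 V W μ)
  | n+1 => ((psiPair n).2, psiStep V W μ n (psiPair n).1 (psiPair n).2)

/-- `ψ_{n+1} : W^{⊗(n+1)} → Ω^{ev}` with `ι ∘ ψ_{n+1}` the canonical inclusion. -/
def psi (n : ℕ) : (⨂[V]^(n+1) W) →ₗ[V] OmegaEv V W := (psiPair V W μ n).1

lemma psi_zero : psi V W μ 0 = psi0 V W := rfl

lemma psi_one : psi V W μ 1 = psi1 V W μ := rfl

lemma psi_two_step (n : ℕ) :
    psi V W μ (n+2) = psiStep V W μ n (psi V W μ n) (psi V W μ (n+1)) := by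
  show (psiPair V W μ (n+2)).1 = _
  rw [psiPair]
  rfl


lemma iotaEv_psi0 (t : ⨂[V]^1 W) :
    iotaEv V W μ (psi V W μ 0 t) = prodPow V (TensorAlgebra.ι V) 1 t := by
  induction t using PiTensorProduct.induction_on with
  | smul_tprod r p =>
    simp only [map_smul]
    congr 1
    rw [tp1E_tprod, psi_zero, psi0_tp1E, iotaEv_om0, prodPow_tp1E]
  | add x y hx hy => simp only [map_add]; rw [hx, hy]

lemma iotaEv_psi1 (t : ⨂[V]^2 W) :
    iotaEv V W μ (psi V W μ 1 t) = prodPow V (TensorAlgebra.ι V) 2 t := by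
  induction t using PiTensorProduct.induction_on with
  | smul_tprod r p =>
    simp only [map_smul]
    congr 1
    rw [tprod_eq_e2, psi_one, psi1_e2, map_sub, iotaEv_om0, unitOm_apply, iotaEv_omInj,
      iotaTwo_tmul, wplus_apply, map_one, map_zero, add_zero, fedosovProd_eq, prodPow_tp1E,
      fedosovD_tmul, TensorProduct.lift.tmul, one_mul, sub_sub_cancel]
    rw [← tprod_eq_e2, prodPow_tprod]
    simp
  | add x y hx hy => simp only [map_add]; rw [hx, hy]

lemma iotaEv_psi : ∀ (n : ℕ) (t : ⨂[V]^(n+1) W),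
    iotaEv V W μ (psi V W μ n t) = prodPow V (TensorAlgebra.ι V) (n+1) t := by
  have main : ∀ n : ℕ,
      (∀ t, iotaEv V W μ (psi V W μ n t) = prodPow V (TensorAlgebra.ι V) (n+1) t)
      ∧ (∀ t, iotaEv V W μ (psi V W μ (n+1) t) = prodPow V (TensorAlgebra.ι V) (n+2) t) := by
    intro n
    induction n with
    | zero => exact ⟨iotaEv_psi0 V W μ, iotaEv_psi1 V W μ⟩
    | succ n ih =>
      refine ⟨ih.2, fun t => ?_⟩
      induction t using PiTensorProduct.induction_on with
      | smul_tprod r p =>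
        simp only [map_smul]
        congr 1
        set q : Fin (n+1) → W := Fin.init (Fin.init p) with hq
        set x : W := Fin.init p (Fin.last (n+1)) with hx
        set y : W := p (Fin.last (n+2)) with hy
        have h1 : PiTensorProduct.tprod V p
            = appPow V W (n+2) (appPow V W (n+1) (PiTensorProduct.tprod V q) x) y := by
          rw [appPow_tprod, appPow_tprod, hq, hx, hy, Fin.snoc_init_self, Fin.snoc_init_self]
        rw [h1]
        conv_lhs => rw [← mulE_e2]
        rw [psi_two_step, psiStep_apply, map_sub, ih.2, iotaEv_appOm, ih.1,
          TensorProduct.lift.tmul, fedosovD_tmul, prodPow_appPow, prodPow_appPow,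
          prodPow_appPow, mul_sub, sub_sub_cancel, mul_assoc]
      | add a b ha hb => simp only [map_add]; rw [ha, hb]
  exact fun n => (main n).1


/-- The assembled map `⨁_{n≥0} W^{⊗(n+1)} → Ω^{ev}`. -/
def psiHat : (⨁ n : ℕ, ⨂[V]^(n+1) W) →ₗ[V] OmegaEv V W :=
  DirectSum.toModule V ℕ (OmegaEv V W) (psi V W μ)

lemma psiHat_lof (n : ℕ) (t : ⨂[V]^(n+1) W) :
    psiHat V W μ (DirectSum.lof V ℕ (fun m => ⨂[V]^(m+1) W) n t) = psi V W μ n t := by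
  simp [psiHat, DirectSum.toModule_lof]

lemma psi_mem_range (n : ℕ) (t : ⨂[V]^(n+1) W) :
    psi V W μ n t ∈ LinearMap.range (psiHat V W μ) :=
  ⟨DirectSum.lof V ℕ (fun m => ⨂[V]^(m+1) W) n t, psiHat_lof V W μ n t⟩

lemma om0_mem_range (w : W) : om0 V W w ∈ LinearMap.range (psiHat V W μ) := by
  rw [← psi0_tp1E, ← psi_zero (μ := μ)]
  exact psi_mem_range V W μ 0 _

lemma unitOm_mem_range (ξ : W ⊗[V] W) :
    unitOm V W ξ ∈ LinearMap.range (psiHat V W μ) := by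
  have h : unitOm V W ξ
      = psi V W μ 0 (tp1E V W (TensorProduct.lift μ ξ)) - psi V W μ 1 (e2 V W ξ) := by
    rw [psi_zero, psi0_tp1E, psi_one, psi1_e2]
    abel
  rw [h]
  exact sub_mem (psi_mem_range V W μ 0 _) (psi_mem_range V W μ 1 _)

lemma appOm_psi_mem_range (n : ℕ) (t : ⨂[V]^(n+1) W) (ξ : W ⊗[V] W) :
    appOm V W (psi V W μ n t) ξ ∈ LinearMap.range (psiHat V W μ) := by
  have h := psiStep_apply V W μ n (psi V W μ n) (psi V W μ (n+1)) t ξ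
  rw [← psi_two_step] at h
  have h2 : appOm V W (psi V W μ n t) ξ
      = psi V W μ (n+1) (appPow V W (n+1) t (TensorProduct.lift μ ξ))
        - psi V W μ (n+2) (TensorPower.mulEquiv (R := V) (M := W) (n := n+1) (m := 2)
            (t ⊗ₜ[V] e2 V W ξ)) := by
    rw [h]; abel
  rw [h2]
  exact sub_mem (psi_mem_range V W μ (n+1) _) (psi_mem_range V W μ (n+2) _)

lemma appOm_mem_range (ω : OmegaEv V W) (hω : ω ∈ LinearMap.range (psiHat V W μ))
    (ξ : W ⊗[V] W) : appOm V W ω ξ ∈ LinearMap.range (psiHat V W μ) := by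
  obtain ⟨z, rfl⟩ := hω
  induction z using DirectSum.induction_on with
  | zero => rw [map_zero, map_zero, LinearMap.zero_apply]; exact zero_mem _
  | of n t =>
    rw [← DirectSum.lof_eq_of V, psiHat_lof]
    exact appOm_psi_mem_range V W μ n t ξ
  | add z₁ z₂ h₁ h₂ =>
    rw [map_add, map_add, LinearMap.add_apply]
    exact add_mem h₁ h₂

lemma omInj_mem_range (l : ℕ) (z : OmegaTwo V W l) :
    omInj V W l z ∈ LinearMap.range (psiHat V W μ) := by
  induction l with
  | zero =>
    induction z using TensorProduct.induction_on with
    | zero => rw [map_zero]; exact zero_mem _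
    | tmul v τ =>
      induction τ using PiTensorProduct.induction_on with
      | smul_tprod r f =>
        rw [TensorProduct.tmul_smul, map_smul]
        refine Submodule.smul_mem _ r ?_
        rw [tp1E_tprod]
        have hv : v = v.1 • (((1:V), (0:W)) : V × W) + (((0:V), v.2) : V × W) := by
          ext <;> simp
        rw [hv, TensorProduct.add_tmul, ← TensorProduct.smul_tmul', map_add, map_smul]
        refine add_mem (Submodule.smul_mem _ _ ?_) ?_
        · rw [← unitOm_apply]
          exact unitOm_mem_range V W μ _
        · rw [← appOm_om0]
          exact appOm_mem_range V W μ _ (om0_mem_range V W μ _) _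
      | add τ₁ τ₂ h₁ h₂ =>
        rw [TensorProduct.tmul_add, map_add]
        exact add_mem h₁ h₂
    | add z₁ z₂ h₁ h₂ =>
      rw [map_add]
      exact add_mem h₁ h₂
  | succ l ih =>
    induction z using TensorProduct.induction_on with
    | zero => rw [map_zero]; exact zero_mem _
    | tmul v τ =>
      induction τ using PiTensorProduct.induction_on with
      | smul_tprod r f =>
        rw [TensorProduct.tmul_smul, map_smul]
        refine Submodule.smul_mem _ r ?_
        have hf : PiTensorProduct.tprod V f
            = appPow V (W ⊗[V] W) (l+1) (PiTensorProduct.tprod V (Fin.init f))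
                (f (Fin.last (l+1))) := by
          rw [appPow_tprod, Fin.snoc_init_self]
        rw [hf, ← appOm_omInj]
        exact appOm_mem_range V W μ _ (ih _) _
      | add τ₁ τ₂ h₁ h₂ =>
        rw [TensorProduct.tmul_add, map_add]
        exact add_mem h₁ h₂
    | add z₁ z₂ h₁ h₂ =>
      rw [map_add]
      exact add_mem h₁ h₂

lemma psiHat_surjective : Function.Surjective (psiHat V W μ) := by
  intro ω
  suffices h : ω ∈ LinearMap.range (psiHat V W μ) by exact h
  obtain ⟨w, d⟩ := ω
  rw [show ((w, d) : OmegaEv V W) = om0 V W w + ((0:W), d) from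
    by rw [om0, LinearMap.inl_apply, Prod.mk_add_mk, add_zero, zero_add]]
  refine add_mem (om0_mem_range V W μ w) ?_
  induction d using DirectSum.induction_on with
  | zero => exact zero_mem _
  | of l z =>
    rw [show (((0:W), DirectSum.of (OmegaTwo V W) l z) : OmegaEv V W) = omInj V W l z from rfl]
    exact omInj_mem_range V W μ l z
  | add d₁ d₂ h₁ h₂ =>
    rw [show (((0:W), d₁ + d₂) : OmegaEv V W) = ((0:W), d₁) + (((0:W), d₂) : OmegaEv V W) from
      by rw [Prod.mk_add_mk, add_zero]]
    exact add_mem h₁ h₂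


/-- Shifting a direct sum of positive tensor powers into the full direct sum. -/
def shiftL : (⨁ n : ℕ, ⨂[V]^(n+1) W) →ₗ[V] ⨁ n : ℕ, ⨂[V]^n W :=
  DirectSum.toModule V ℕ _ fun n => DirectSum.lof V ℕ (fun m => ⨂[V]^m W) (n+1)

/-- One-sided inverse of `shiftL`. -/
def shiftR : (⨁ n : ℕ, ⨂[V]^n W) →ₗ[V] ⨁ n : ℕ, ⨂[V]^(n+1) W :=
  DirectSum.toModule V ℕ _ fun m =>
    Nat.rec (motive := fun m => (⨂[V]^m W) →ₗ[V] ⨁ n : ℕ, ⨂[V]^(n+1) W) 0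
      (fun k _ => DirectSum.lof V ℕ (fun n => ⨂[V]^(n+1) W) k) m

lemma shiftR_shiftL (x : ⨁ n : ℕ, ⨂[V]^(n+1) W) : shiftR V W (shiftL V W x) = x := by
  induction x using DirectSum.induction_on with
  | zero => rw [map_zero, map_zero]
  | of n t =>
    rw [← DirectSum.lof_eq_of V, shiftL, DirectSum.toModule_lof, shiftR, DirectSum.toModule_lof]
  | add x y hx hy => rw [map_add, map_add, hx, hy]

lemma shiftL_injective : Function.Injective (shiftL V W) := by
  intro x y h
  rw [← shiftR_shiftL V W x, h, shiftR_shiftL]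

lemma toDirectSum_prodPow (n : ℕ) (t : ⨂[V]^n W) :
    TensorAlgebra.toDirectSum (prodPow V (TensorAlgebra.ι V) n t)
      = DirectSum.lof V ℕ (fun m => ⨂[V]^m W) n t := by
  induction t using PiTensorProduct.induction_on with
  | smul_tprod r p =>
    rw [map_smul, map_smul, map_smul]
    congr 1
    rw [prodPow_tprod, ← TensorAlgebra.tprod_apply, TensorAlgebra.toDirectSum_tensorPower_tprod,
      DirectSum.lof_eq_of]
  | add x y hx hy => rw [map_add, map_add, map_add, hx, hy]

lemma toDirectSum_iotaEv_psiHat (z : ⨁ n : ℕ, ⨂[V]^(n+1) W) :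
    TensorAlgebra.toDirectSum (iotaEv V W μ (psiHat V W μ z)) = shiftL V W z := by
  induction z using DirectSum.induction_on with
  | zero => rw [map_zero, map_zero, map_zero, map_zero]
  | of n t =>
    rw [← DirectSum.lof_eq_of V, psiHat_lof, iotaEv_psi, toDirectSum_prodPow, shiftL,
      DirectSum.toModule_lof]
  | add x y hx hy => rw [map_add, map_add, map_add, map_add, hx, hy]

lemma iotaEv_injective : Function.Injective (iotaEv V W μ) := by
  intro a b h
  obtain ⟨x, rfl⟩ := psiHat_surjective V W μ a
  obtain ⟨y, rfl⟩ := psiHat_surjective V W μ b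
  have h2 : shiftL V W x = shiftL V W y := by
    rw [← toDirectSum_iotaEv_psiHat, ← toDirectSum_iotaEv_psiHat, h]
  rw [shiftL_injective V W h2]

/-! ### The augmentation ideal -/

lemma aug_iota_apply (w : W) : augmentation V W (TensorAlgebra.ι V w) = 0 := by
  rw [augmentation, TensorAlgebra.lift_ι_apply, LinearMap.zero_apply]

lemma aug_prodPow (n : ℕ) (t : ⨂[V]^(n+1) W) :
    augmentation V W (prodPow V (TensorAlgebra.ι V) (n+1) t) = 0 := by
  induction t using PiTensorProduct.induction_on with
  | smul_tprod r p =>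
    rw [map_smul, map_smul, prodPow_tprod, map_list_prod, List.map_ofFn, List.ofFn_succ,
      List.prod_cons]
    simp only [Function.comp_apply, aug_iota_apply, zero_mul, smul_zero]
  | add x y hx hy => rw [map_add, map_add, hx, hy, add_zero]

lemma aug_iotaEv (ω : OmegaEv V W) :
    augmentation V W (iotaEv V W μ ω) = 0 := by
  obtain ⟨z, rfl⟩ := psiHat_surjective V W μ ω
  induction z using DirectSum.induction_on with
  | zero => rw [map_zero, map_zero, map_zero]
  | of n t =>
    rw [← DirectSum.lof_eq_of V, psiHat_lof, iotaEv_psi, aug_prodPow]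
  | add x y hx hy => rw [map_add, map_add, map_add, hx, hy, add_zero]

/-- The span of the positive tensor powers inside the tensor algebra. -/
def bigS : Submodule V (TensorAlgebra V W) :=
  ⨆ n : ℕ, LinearMap.range (prodPow V (TensorAlgebra.ι V (M := W)) (n+1))

lemma bigS_le_range : bigS V W ≤ LinearMap.range (iotaEv V W μ) := by
  refine iSup_le fun n => ?_
  rintro _ ⟨t, rfl⟩
  exact ⟨psi V W μ n t, iotaEv_psi V W μ n t⟩

lemma bigS_le_ker : bigS V W ≤ LinearMap.ker (augmentation V W).toLinearMap := by
  refine iSup_le fun n => ?_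
  rintro _ ⟨t, rfl⟩
  exact aug_prodPow V W n t

lemma bigS_mul_left (n : ℕ) (t : ⨂[V]^(n+1) W) {b : TensorAlgebra V W} (hb : b ∈ bigS V W) :
    prodPow V (TensorAlgebra.ι V) (n+1) t * b ∈ bigS V W := by
  refine Submodule.iSup_induction (x := b)
    (motive := fun b => prodPow V (TensorAlgebra.ι V) (n+1) t * b ∈ bigS V W) _ hb ?_ ?_ ?_
  · rintro m _ ⟨u, rfl⟩
    refine Submodule.mem_iSup_of_mem (n+1+m) ?_
    exact ⟨TensorPower.mulEquiv (R := V) (M := W) (n := n+1) (m := m+1) (t ⊗ₜ[V] u),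
      prodPow_mulE V (TensorAlgebra.ι V) (n+1) (m+1) t u⟩
  · rw [mul_zero]; exact zero_mem _
  · intro x y hx hy
    rw [mul_add]
    exact add_mem hx hy

lemma bigS_mul {a b : TensorAlgebra V W} (ha : a ∈ bigS V W) (hb : b ∈ bigS V W) :
    a * b ∈ bigS V W := by
  refine Submodule.iSup_induction (x := a) (motive := fun a => a * b ∈ bigS V W) _ ha ?_ ?_ ?_
  · rintro n _ ⟨t, rfl⟩
    exact bigS_mul_left V W n t hb
  · rw [zero_mul]; exact zero_mem _
  · intro x y hx hy
    rw [add_mul]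
    exact add_mem hx hy

lemma mem_sup_ralg_bigS (x : TensorAlgebra V W) :
    x ∈ LinearMap.range (Algebra.linearMap V (TensorAlgebra V W)) ⊔ bigS V W := by
  refine TensorAlgebra.induction ?_ ?_ ?_ ?_ x
  · intro r
    exact Submodule.mem_sup_left ⟨r, rfl⟩
  · intro w
    refine Submodule.mem_sup_right (Submodule.mem_iSup_of_mem 0 ?_)
    exact ⟨tp1E V W w, prodPow_tp1E V (TensorAlgebra.ι V) w⟩
  · intro a b ha hb
    rw [Submodule.mem_sup] at ha hb
    obtain ⟨ya, ⟨ra, rfl⟩, sa, hsa, rfl⟩ := ha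
    obtain ⟨yb, ⟨rb, rfl⟩, sb, hsb, rfl⟩ := hb
    simp only [Algebra.linearMap_apply]
    rw [add_mul, mul_add, mul_add]
    refine add_mem (add_mem ?_ ?_) (add_mem ?_ ?_)
    · exact Submodule.mem_sup_left ⟨ra * rb, by rw [Algebra.linearMap_apply, map_mul]⟩
    · rw [← Algebra.smul_def]
      exact Submodule.mem_sup_right (Submodule.smul_mem _ _ hsb)
    · rw [← Algebra.commutes, ← Algebra.smul_def]
      exact Submodule.mem_sup_right (Submodule.smul_mem _ _ hsa)
    · exact Submodule.mem_sup_right (bigS_mul V W hsa hsb)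
  · intro a b ha hb
    exact add_mem ha hb

lemma range_iotaEv :
    LinearMap.range (iotaEv V W μ) = LinearMap.ker (augmentation V W).toLinearMap := by
  refine le_antisymm ?_ ?_
  · rintro _ ⟨ω, rfl⟩
    exact aug_iotaEv V W μ ω
  · intro x hx
    have hx0 : augmentation V W x = 0 := hx
    have hmem := mem_sup_ralg_bigS V W x
    rw [Submodule.mem_sup] at hmem
    obtain ⟨y, ⟨r, rfl⟩, s, hs, rfl⟩ := hmem
    have haugs : augmentation V W s = 0 := bigS_le_ker V W hs
    have hr : r = 0 := by
      have := hx0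
      rw [map_add, haugs, add_zero, Algebra.linearMap_apply] at this
      rwa [AlgHom.commutes, Algebra.algebraMap_self_apply] at this
    rw [hr, map_zero, zero_add]
    exact bigS_le_range V W μ hs


/-- For every `V`-module `W` and every `V`-bilinear map `μ`, the map
`ι : Ω^{ev}(W) → T W` is a bijective `V`-linear map onto the non-unital tensor algebra
`T W` (the augmentation ideal of `TensorAlgebra V W`). -/
theorem iotaEv_injective_and_range_eq (π : V) (hπ : Irreducible π) :
    Function.Injective (iotaEv V W μ) ∧
      LinearMap.range (iotaEv V W μ) = LinearMap.ker (augmentation V W).toLinearMap := by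
  exact ⟨iotaEv_injective V W μ, range_iotaEv V W μ⟩

end
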